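/- Monotonicity of polar quotients across packages: for 0 ≤ l < k ≤ r−1, (1/(e_l))·(Σ_{w=1}^{l} m_w(e_{w-1} − e_w)/n + m_{l+1} e_l/n) < (1/(e_k))·(Σ_{w=1}^{k} m_w(e_{w-1} − e_w)/n + m_{k+1} e_k/n); equivalently Σ_{w=1}^{l} m_w(e_{w-1} − e_w) + m_{l+1} e_l < Σ_{w=1}^{k} m_w(e_{w-1} − e_w) + m_{k+1} e_k. -/

import Mathlib

/-- Monotonicity of polar quotients across Merle packages: for `0 ≤ l < k ≤ r - 1`,
`∑_{w=1}^{l} m w * (e (w-1) - e w) + m (l+1) * e l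
  < ∑_{w=1}^{k} m w * (e (w-1) - e w) + m (k+1) * e k`. -/
theorem stmt18 (r n l k : ℕ) (m e : ℕ → ℕ)
    (hn : 0 < n) (hm0 : m 0 = 0)
    (hmono : ∀ i, i < r → m i < m (i + 1))
    (he0 : e 0 = n)
    (hgcd : ∀ j, 1 ≤ j → j ≤ r → e j = Nat.gcd (e (j - 1)) (m j))
    (her : e r = 1) (hlk : l < k) (hk : k ≤ r - 1) :
    (∑ w ∈ Finset.Icc 1 l, (m w : ℤ) * ((e (w - 1) : ℤ) - (e w : ℤ)))
        + (m (l + 1) : ℤ) * (e l : ℤ)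
      < (∑ w ∈ Finset.Icc 1 k, (m w : ℤ) * ((e (w - 1) : ℤ) - (e w : ℤ)))
        + (m (k + 1) : ℤ) * (e k : ℤ) := by
  -- positivity of e
  have epos : ∀ j, j ≤ r → 0 < e j := by
    intro j
    induction j with
    | zero => intro _; rw [he0]; exact hn
    | succ j ih =>
      intro hj
      rw [hgcd (j + 1) (Nat.le_add_left 1 j) hj]
      simp only [Nat.add_sub_cancel]
      exact Nat.gcd_pos_of_pos_left _ (ih (Nat.le_of_succ_le hj))
  -- single step
  have step : ∀ j, j + 1 ≤ r - 1 →
      (∑ w ∈ Finset.Icc 1 j, (m w : ℤ) * ((e (w - 1) : ℤ) - (e w : ℤ)))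
          + (m (j + 1) : ℤ) * (e j : ℤ)
        < (∑ w ∈ Finset.Icc 1 (j + 1), (m w : ℤ) * ((e (w - 1) : ℤ) - (e w : ℤ)))
          + (m (j + 2) : ℤ) * (e (j + 1) : ℤ) := by
    intro j hj
    have hr : j + 1 < r := by omega
    rw [Finset.sum_Icc_succ_top (by omega : 1 ≤ j + 1)]
    simp only [Nat.add_sub_cancel]
    have hm : (m (j + 1) : ℤ) < (m (j + 2) : ℤ) := by
      exact_mod_cast hmono (j + 1) hr
    have he : (0 : ℤ) < (e (j + 1) : ℤ) := by
      exact_mod_cast epos (j + 1) (by omega)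
    nlinarith [mul_lt_mul_of_pos_right hm he]
  clear hgcd hm0 her he0 hn
  induction k with
  | zero => omega
  | succ k ih =>
    rcases Nat.lt_succ_iff_lt_or_eq.mp hlk with h | h
    · exact lt_trans (ih h (by omega)) (step k hk)
    · subst h; exact step l hk
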